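/- Let g be an invertible linear map on a finite-dimensional vector space V over a field and suppose V is spanned by g-cyclic subspaces (Frobenius blocks) each of dimension at least 2. Then there exists a subspace W ≤ V with W ∩ W.g = 0 and dim W ≥ dim(V)/3. More precisely, if V = ⊕_b V_b with each V_b a g-cyclic subspace of dimension k_b > 1 with cyclic vector v_b, then W = ⊕_b span{v_b, v_b.g^2, …, v_b.g^{2(⌊k_b/2⌋−1)}} satisfies W ∩ W.g = 0. -/

import Mathlib

open Module Submodule

theorem exists_disjoint_from_image_subspace (F : Type*) [Field F] (V : Type*)
    [AddCommGroup V] [Module F V] [FiniteDimensional F V]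
    (g : V ≃ₗ[F] V) (ι : Type*) [Fintype ι] (v : ι → V) (k : ι → ℕ)
    (hk : ∀ i, 2 ≤ k i)
    (B : ι → Submodule F V)
    (hB : ∀ i, B i = Submodule.span F
      (Set.range fun j : Fin (k i) => (g ^ (j : ℕ)) (v i)))
    (hdim : ∀ i, finrank F (B i) = k i)
    (hindep : iSupIndep B)
    (hsup : ⨆ i, B i = ⊤) :
    (∃ W : Submodule F V, W ⊓ W.map (g : V →ₗ[F] V) = ⊥ ∧
        finrank F V ≤ 3 * finrank F W) ∧
      ((⨆ i, Submodule.span F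
          (Set.range fun j : Fin (k i / 2) => (g ^ (2 * (j : ℕ))) (v i))) ⊓
        (⨆ i, Submodule.span F
          (Set.range fun j : Fin (k i / 2) => (g ^ (2 * (j : ℕ))) (v i))).map
            (g : V →ₗ[F] V) = ⊥) := by
  classical
  set W : Submodule F V := ⨆ i, Submodule.span F
      (Set.range fun j : Fin (k i / 2) => (g ^ (2 * (j : ℕ))) (v i)) with hW
  -- the big family
  set f : (Σ i, Fin (k i)) → V := fun p => (g ^ (p.2 : ℕ)) (v p.1) with hf
  -- each block family is linearly independent
  have hli : ∀ i, LinearIndependent F (fun j : Fin (k i) => (g ^ (j : ℕ)) (v i)) := by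
    intro i
    rw [linearIndependent_iff_card_eq_finrank_span]
    rw [Set.finrank, ← hB i, hdim i, Fintype.card_fin]
  -- bases of each block
  have hInt : DirectSum.IsInternal B :=
    (DirectSum.isInternal_submodule_iff_iSupIndep_and_iSup_eq_top B).mpr ⟨hindep, hsup⟩
  let bas : ∀ i, Basis (Fin (k i)) F (B i) := fun i =>
    (Basis.span (hli i)).map (LinearEquiv.ofEq _ _ (hB i).symm)
  let bigBas : Basis (Σ i, Fin (k i)) F V := hInt.collectedBasis bas
  have hbigBas : ⇑bigBas = f := by
    funext p
    rw [hInt.collectedBasis_coe]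
    show ((bas p.1 p.2 : B p.1) : V) = f p
    simp only [bas, Basis.map_apply, LinearEquiv.coe_ofEq_apply]
    exact congrArg Subtype.val (Basis.span_apply (hli p.1) p.2)
  have hfli : LinearIndependent F f := hbigBas ▸ bigBas.linearIndependent
  have hfinj : Function.Injective f := hfli.injective
  -- the even family
  have hemb : ∀ i (j : Fin (k i / 2)), 2 * (j : ℕ) < k i := by
    intro i j; have := j.2; omega
  set emb : (Σ i, Fin (k i / 2)) → (Σ i, Fin (k i)) :=
    fun p => ⟨p.1, ⟨2 * (p.2 : ℕ), hemb p.1 p.2⟩⟩ with hembdef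
  have hembinj : Function.Injective emb := by
    rintro ⟨i, j⟩ ⟨i', j'⟩ h
    simp only [emb, Sigma.mk.inj_iff] at h
    obtain ⟨rfl, h⟩ := h
    simp only [heq_eq_eq, Fin.mk.injEq] at h
    exact Sigma.ext rfl (by simpa [Fin.ext_iff] using h)
  set e : (Σ i, Fin (k i / 2)) → V := f ∘ emb with he
  have heli : LinearIndependent F e := hfli.comp emb hembinj
  -- W is the span of the range of e
  have hWspan : W = Submodule.span F (Set.range e) := by
    rw [hW]
    rw [← Submodule.span_iUnion]
    congr 1
    ext x
    simp only [Set.mem_iUnion, Set.mem_range, he, Function.comp, emb, f]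
    constructor
    · rintro ⟨i, j, rfl⟩; exact ⟨⟨i, j⟩, rfl⟩
    · rintro ⟨⟨i, j⟩, rfl⟩; exact ⟨i, j, rfl⟩
  -- disjointness
  have hdisj : W ⊓ W.map (g : V →ₗ[F] V) = ⊥ := by
    have hE : Set.range e ⊆ f '' {p | (p.2 : ℕ) % 2 = 0} := by
      rintro x ⟨⟨i, j⟩, rfl⟩
      exact ⟨emb ⟨i, j⟩, by simp [emb], rfl⟩
    have hO : (g : V →ₗ[F] V) '' Set.range e ⊆ f '' {p | (p.2 : ℕ) % 2 = 1} := by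
      rintro x ⟨y, ⟨⟨i, j⟩, rfl⟩, rfl⟩
      have hj : 2 * (j : ℕ) + 1 < k i := by have := j.2; have := hk i; omega
      refine ⟨⟨i, ⟨2 * (j : ℕ) + 1, hj⟩⟩, by simp only [Set.mem_setOf_eq]; omega, ?_⟩
      show f _ = g (e ⟨i, j⟩)
      simp only [f, e, Function.comp, emb]
      rw [pow_succ']
      rfl
    have hdsp : Disjoint (Submodule.span F (f '' {p | (p.2 : ℕ) % 2 = 0}))
        (Submodule.span F (f '' {p | (p.2 : ℕ) % 2 = 1})) := by
      apply hfli.disjoint_span_image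
      rw [Set.disjoint_left]
      intro p hp hq
      simp only [Set.mem_setOf_eq] at hp hq
      omega
    have h1 : W ≤ Submodule.span F (f '' {p | (p.2 : ℕ) % 2 = 0}) := by
      rw [hWspan]; exact Submodule.span_mono hE
    have h2 : W.map (g : V →ₗ[F] V) ≤ Submodule.span F (f '' {p | (p.2 : ℕ) % 2 = 1}) := by
      rw [hWspan, Submodule.map_span]
      exact Submodule.span_mono hO
    exact le_bot_iff.mp ((hdsp.mono h1 h2).le_bot)
  refine ⟨⟨W, hdisj, ?_⟩, hdisj⟩
  -- dimension count
  have hV : finrank F V = ∑ i, k i := by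
    rw [finrank_eq_card_basis bigBas]
    simp [Fintype.card_sigma]
  have hWrank : finrank F W = ∑ i, k i / 2 := by
    rw [hWspan, finrank_span_eq_card heli]
    simp [Fintype.card_sigma]
  rw [hV, hWrank, Finset.mul_sum]
  apply Finset.sum_le_sum
  intro i _
  have := hk i
  omega
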